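/- arXiv:1812.06695 — 2 statements merged into one kernel-verified Lean document; each statement's English description precedes it below -/
import Mathlib

section
/- Let q : [0,T] → ℝ be continuous with q(t) > 0, let c₁, c₂ : [0,T] → ℝ be continuous with c₂(t) > 0, let p > 1, and let q_T ≥ 0. Then the backward ODE ξ̇(t) + q(t) + c₁(t)·ξ(t) − c₂(t)·ξ(t)^p = 0 with terminal condition ξ(T) = q_T has a unique solution on [0,T], and this solution satisfies ξ(t) > 0 for all t ∈ [0,T). -/
open Set Filter Topology

private lemma slope_right {g : ℝ → ℝ} {d u : ℝ} (h : HasDerivAt g d u) (hd : d < 0)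
    (hgu : g u = 0) : ∀ᶠ t in 𝓝[>] u, g t < 0 := by
  have hs : Tendsto (slope g u) (𝓝[≠] u) (𝓝 d) := hasDerivAt_iff_tendsto_slope.mp h
  have h1 : ∀ᶠ t in 𝓝[≠] u, slope g u t < 0 := hs.eventually_lt_const hd
  have h2 : ∀ᶠ t in 𝓝[>] u, slope g u t < 0 :=
    h1.filter_mono (nhdsWithin_mono u fun x hx => ne_of_gt hx)
  filter_upwards [h2, self_mem_nhdsWithin] with t ht hut
  rw [slope_def_field, hgu, sub_zero] at ht
  rcases div_neg_iff.mp ht with ⟨_, h5⟩ | ⟨h5, _⟩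
  · have : (0:ℝ) < t - u := sub_pos.mpr hut
    linarith
  · exact h5

private lemma slope_left {g : ℝ → ℝ} {d u : ℝ} (h : HasDerivAt g d u) (hd : d < 0)
    (hgu : g u = 0) : ∀ᶠ t in 𝓝[<] u, 0 < g t := by
  have hs : Tendsto (slope g u) (𝓝[≠] u) (𝓝 d) := hasDerivAt_iff_tendsto_slope.mp h
  have h1 : ∀ᶠ t in 𝓝[≠] u, slope g u t < 0 := hs.eventually_lt_const hd
  have h2 : ∀ᶠ t in 𝓝[<] u, slope g u t < 0 :=
    h1.filter_mono (nhdsWithin_mono u fun x hx => ne_of_lt hx)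
  filter_upwards [h2, self_mem_nhdsWithin] with t ht hut
  rw [slope_def_field, hgu, sub_zero] at ht
  rcases div_neg_iff.mp ht with ⟨h5, _⟩ | ⟨_, h5⟩
  · exact h5
  · have : t - u < 0 := sub_neg.mpr hut
    linarith

private lemma barrier {T : ℝ} (hT : 0 < T) (g d : ℝ → ℝ)
    (hg : ∀ t ∈ Set.Icc 0 T, HasDerivAt g (d t) t)
    (hgT : 0 ≤ g T)
    (hd : ∀ t ∈ Set.Icc 0 T, g t = 0 → d t < 0) :
    ∀ t ∈ Set.Ico 0 T, 0 < g t := by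
  have hTmem : T ∈ Icc (0:ℝ) T := ⟨hT.le, le_rfl⟩
  have hnear : ∀ᶠ t in 𝓝[<] T, 0 < g t := by
    rcases eq_or_lt_of_le hgT with h0 | h0
    · exact slope_left (hg T hTmem) (hd T hTmem h0.symm) h0.symm
    · exact (((hg T hTmem).continuousAt.tendsto).mono_left nhdsWithin_le_nhds).eventually_const_lt h0
  intro s hs
  by_contra hcon
  push_neg at hcon
  obtain ⟨a, haT, hab⟩ := mem_nhdsLT_iff_exists_Ioo_subset.mp hnear
  set b : ℝ := (max a s + T) / 2 with hb
  have hmaxT : max a s < T := max_lt haT hs.2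
  have hb1 : max a s < b := by rw [hb]; linarith
  have hb2 : b < T := by rw [hb]; linarith
  have hsb : s ≤ b := le_trans (le_max_right a s) hb1.le
  have hab' : a < b := lt_of_le_of_lt (le_max_left a s) hb1
  have hgb : 0 < g b := hab ⟨hab', hb2⟩
  have hsub : Icc s b ⊆ Icc 0 T := Icc_subset_Icc hs.1 hb2.le
  have hcont : ContinuousOn g (Icc 0 T) := fun t ht =>
    (hg t ht).continuousAt.continuousWithinAt
  set A : Set ℝ := Icc s b ∩ g ⁻¹' (Iic 0) with hA
  have hA_closed : IsClosed A :=
    (hcont.mono hsub).preimage_isClosed_of_isClosed isClosed_Icc isClosed_Iic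
  have hA_ne : A.Nonempty := ⟨s, ⟨le_rfl, hsb⟩, hcon⟩
  have hA_bdd : BddAbove A := BddAbove.mono inter_subset_left bddAbove_Icc
  obtain ⟨⟨hsu, hub⟩, hgu⟩ := hA_closed.csSup_mem hA_ne hA_bdd
  set u := sSup A with hu
  have hgu' : g u ≤ 0 := hgu
  have huIcc : u ∈ Icc 0 T := hsub ⟨hsu, hub⟩
  have hright : ∀ t, u < t → t ≤ b → 0 < g t := by
    intro t h1 h2
    by_contra h3
    push_neg at h3
    have htA : t ∈ A := ⟨⟨le_trans hsu h1.le, h2⟩, h3⟩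
    exact absurd (le_csSup hA_bdd htA) (not_le.mpr h1)
  have hub' : u < b := lt_of_le_of_ne hub (fun h => by rw [h] at hgu'; linarith)
  have hgu0 : g u = 0 := by
    have htend : Tendsto g (𝓝[>] u) (𝓝 (g u)) :=
      ((hg u huIcc).continuousAt.tendsto).mono_left nhdsWithin_le_nhds
    have hev : ∀ᶠ t in 𝓝[>] u, 0 ≤ g t := by
      filter_upwards [Ioc_mem_nhdsGT hub'] with t ht
      exact (hright t ht.1 ht.2).le
    have := ge_of_tendsto htend hev
    linarith
  have hdneg : d u < 0 := hd u huIcc hgu0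
  have hneg : ∀ᶠ t in 𝓝[>] u, g t < 0 := slope_right (hg u huIcc) hdneg hgu0
  have hposev : ∀ᶠ t in 𝓝[>] u, 0 < g t := by
    filter_upwards [Ioc_mem_nhdsGT hub'] with t ht
    exact hright t ht.1 ht.2
  obtain ⟨t, h1, h2⟩ := (hneg.and hposev).exists
  linarith

private lemma rpow_diff_le {p M x y : ℝ} (hp : 1 < p) (hx : x ∈ Set.Icc 0 M)
    (hy : y ∈ Set.Icc 0 M) : |x ^ p - y ^ p| ≤ p * M ^ (p - 1) * |x - y| := by
  have key := Convex.norm_image_sub_le_of_norm_hasDerivWithin_le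
    (f := fun z : ℝ => z ^ p) (f' := fun z : ℝ => p * z ^ (p - 1)) (s := Set.Icc 0 M)
    (C := p * M ^ (p - 1))
    (fun z _ => (Real.hasDerivAt_rpow_const (Or.inr hp.le)).hasDerivWithinAt)
    (fun z hz => by
      rw [Real.norm_eq_abs,
        abs_of_nonneg (mul_nonneg (by linarith) (Real.rpow_nonneg hz.1 _))]
      exact mul_le_mul_of_nonneg_left
        (Real.rpow_le_rpow hz.1 hz.2 (by linarith)) (by linarith))
    (convex_Icc 0 M) hy hx
  simpa [Real.norm_eq_abs, abs_sub_comm] using key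

/-- Existence, uniqueness and positivity for the scalar Riccati-type backward ODE
`ξ̇ + q + c₁ ξ - c₂ ξ^p = 0`, `ξ(T) = q_T ≥ 0`, with `p > 1`. -/
theorem stmt_6 (T : ℝ) (hT : 0 < T) (q c₁ c₂ : ℝ → ℝ)
    (hq : ContinuousOn q (Set.Icc 0 T)) (hqpos : ∀ t ∈ Set.Icc 0 T, 0 < q t)
    (hc₁ : ContinuousOn c₁ (Set.Icc 0 T)) (hc₂ : ContinuousOn c₂ (Set.Icc 0 T))
    (hc₂pos : ∀ t ∈ Set.Icc 0 T, 0 < c₂ t) (p : ℝ) (hp : 1 < p)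
    (qT : ℝ) (hqT : 0 ≤ qT) :
    ∃ ξ : ℝ → ℝ, ξ T = qT ∧
      (∀ t ∈ Set.Icc 0 T, HasDerivAt ξ (-(q t) - c₁ t * ξ t + c₂ t * ξ t ^ p) t) ∧
      (∀ t ∈ Set.Ico 0 T, 0 < ξ t) ∧
      ∀ ζ : ℝ → ℝ, ζ T = qT →
        (∀ t ∈ Set.Icc 0 T, HasDerivAt ζ (-(q t) - c₁ t * ζ t + c₂ t * ζ t ^ p) t) →
        Set.EqOn ζ ξ (Set.Icc 0 T) := by
  have hp0 : (0:ℝ) < p := by linarith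
  have hp1 : (0:ℝ) < p - 1 := by linarith
  have h0T : (0:ℝ) ∈ Icc (0:ℝ) T := ⟨le_rfl, hT.le⟩
  have hTT : T ∈ Icc (0:ℝ) T := ⟨hT.le, le_rfl⟩
  -- bounds on coefficients
  obtain ⟨qM, hqM⟩ := (isCompact_Icc : IsCompact (Icc (0:ℝ) T)).exists_bound_of_continuousOn hq
  obtain ⟨c1M, hc1M⟩ := (isCompact_Icc : IsCompact (Icc (0:ℝ) T)).exists_bound_of_continuousOn hc₁
  obtain ⟨c2M, hc2M⟩ := (isCompact_Icc : IsCompact (Icc (0:ℝ) T)).exists_bound_of_continuousOn hc₂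
  have hqM0 : 0 ≤ qM := le_trans (norm_nonneg _) (hqM 0 h0T)
  have hc1M0 : 0 ≤ c1M := le_trans (norm_nonneg _) (hc1M 0 h0T)
  have hc2M0 : 0 ≤ c2M := le_trans (norm_nonneg _) (hc2M 0 h0T)
  obtain ⟨t₂, ht₂, hminOn⟩ := (isCompact_Icc : IsCompact (Icc (0:ℝ) T)).exists_isMinOn
    ⟨0, h0T⟩ hc₂
  set cm := c₂ t₂ with hcm
  have hcm0 : 0 < cm := hc₂pos t₂ ht₂
  have hcmle : ∀ t ∈ Icc 0 T, cm ≤ c₂ t := fun t ht => isMinOn_iff.mp hminOn t ht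
  -- choice of the upper barrier M
  set A : ℝ := qM + c1M + 1 with hAdef
  have hA0 : 0 < A := by linarith
  set M : ℝ := max (max 1 (qT + 1)) ((A / cm) ^ (p - 1)⁻¹) with hMdef
  have hM1 : 1 ≤ M := le_trans (le_max_left _ _) (le_max_left _ _)
  have hM0 : (0:ℝ) < M := by linarith
  have hqTM : qT + 1 ≤ M := le_trans (le_max_right 1 _) (le_max_left _ _)
  have hMbig : A ≤ cm * M ^ (p - 1) := by
    have h1 : (A / cm) ^ (p - 1)⁻¹ ≤ M := le_max_right _ _
    have h2 : ((A / cm) ^ (p - 1)⁻¹) ^ (p - 1) ≤ M ^ (p - 1) :=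
      Real.rpow_le_rpow (Real.rpow_nonneg (by positivity) _) h1 hp1.le
    rw [← Real.rpow_mul (by positivity), inv_mul_cancel₀ (ne_of_gt hp1),
      Real.rpow_one] at h2
    calc A = cm * (A / cm) := by field_simp
      _ ≤ cm * M ^ (p - 1) := by nlinarith
  have hMfield : ∀ t ∈ Icc 0 T, q t + c₁ t * M < c₂ t * M ^ p := by
    intro t ht
    have hMp0 : (0:ℝ) ≤ M ^ p := Real.rpow_nonneg hM0.le p
    have h1 : cm * M ^ p ≤ c₂ t * M ^ p := mul_le_mul_of_nonneg_right (hcmle t ht) hMp0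
    have h2 : M ^ p = M ^ (p - 1) * M := by
      rw [← Real.rpow_add_one (ne_of_gt hM0)]; ring_nf
    have h3 : A * M ≤ cm * M ^ p := by rw [h2]; nlinarith
    have h4 := abs_le.mp (by simpa [Real.norm_eq_abs] using hqM t ht)
    have h5 := abs_le.mp (by simpa [Real.norm_eq_abs] using hc1M t ht)
    nlinarith [mul_nonneg hqM0 (by linarith : (0:ℝ) ≤ M - 1)]
  -- Lipschitz constant
  set Lp : ℝ := p * M ^ (p - 1) with hLpdef
  have hLp0 : 0 ≤ Lp := mul_nonneg hp0.le (Real.rpow_nonneg hM0.le _)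
  set K₀ : ℝ := c1M + c2M * Lp with hK₀def
  have hK₀0 : 0 ≤ K₀ := by nlinarith
  have keylip : ∀ t ∈ Icc 0 T, ∀ x ∈ Icc 0 M, ∀ y ∈ Icc 0 M,
      |(-(q t) - c₁ t * x + c₂ t * x ^ p) - (-(q t) - c₁ t * y + c₂ t * y ^ p)|
        ≤ K₀ * |x - y| := by
    intro t ht x hx y hy
    have h5 : |c₁ t| ≤ c1M := by simpa [Real.norm_eq_abs] using hc1M t ht
    have h6 : |c₂ t| ≤ c2M := by simpa [Real.norm_eq_abs] using hc2M t ht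
    have hd : (-(q t) - c₁ t * x + c₂ t * x ^ p) - (-(q t) - c₁ t * y + c₂ t * y ^ p)
        = c₁ t * (y - x) + c₂ t * (x ^ p - y ^ p) := by ring
    rw [hd]
    have e1 : |c₁ t * (y - x)| ≤ c1M * |x - y| := by
      rw [abs_mul, abs_sub_comm y x]
      exact mul_le_mul_of_nonneg_right h5 (abs_nonneg _) |>.trans
        (mul_le_mul_of_nonneg_left le_rfl hc1M0)
    have e2 : |c₂ t * (x ^ p - y ^ p)| ≤ c2M * (Lp * |x - y|) := by
      rw [abs_mul]
      exact mul_le_mul h6 (rpow_diff_le hp hx hy) (abs_nonneg _) hc2M0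
    calc |c₁ t * (y - x) + c₂ t * (x ^ p - y ^ p)|
        ≤ |c₁ t * (y - x)| + |c₂ t * (x ^ p - y ^ p)| := abs_add_le _ _
      _ ≤ c1M * |x - y| + c2M * (Lp * |x - y|) := add_le_add e1 e2
      _ = K₀ * |x - y| := by rw [hK₀def]; ring
  -- truncation
  set φ : ℝ → ℝ := fun x => max 0 (min x M) with hφdef
  have hφmem : ∀ x, φ x ∈ Icc 0 M := fun x =>
    ⟨le_max_left _ _, max_le hM0.le (min_le_right _ _)⟩
  have hφeq : ∀ x, 0 ≤ x → x ≤ M → φ x = x := fun x h1 h2 => by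
    simp only [hφdef]; rw [min_eq_left h2, max_eq_right h1]
  have hφlip : ∀ x y, |φ x - φ y| ≤ |x - y| := by
    intro x y
    have h1 : |max 0 (min x M) - max 0 (min y M)| ≤ |min x M - min y M| := by
      rw [max_comm 0 (min x M), max_comm 0 (min y M)]
      exact abs_max_sub_max_le_abs _ _ _
    refine h1.trans ?_
    have h2 := abs_min_sub_min_le_max x M y M
    simpa using h2
  set v : ℝ → ℝ → ℝ := fun t x => -(q t) - c₁ t * φ x + c₂ t * (φ x) ^ p with hvdef
  -- a priori bound on the truncated field
  set Cb : ℝ := qM + c1M * M + c2M * M ^ p with hCbdef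
  have hMp0 : (0:ℝ) ≤ M ^ p := Real.rpow_nonneg hM0.le p
  have hCb0 : 0 ≤ Cb := by nlinarith
  have hnorm : ∀ t ∈ Icc 0 T, ∀ x : ℝ, |v t x| ≤ Cb := by
    intro t ht x
    obtain ⟨h1, h2⟩ := hφmem x
    have hxp : (φ x) ^ p ≤ M ^ p := Real.rpow_le_rpow h1 h2 hp0.le
    have hxp0 : 0 ≤ (φ x) ^ p := Real.rpow_nonneg h1 _
    have h4 := abs_le.mp (by simpa [Real.norm_eq_abs] using hqM t ht)
    have h5 := abs_le.mp (by simpa [Real.norm_eq_abs] using hc1M t ht)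
    have h6 := abs_le.mp (by simpa [Real.norm_eq_abs] using hc2M t ht)
    have e1 : |c₁ t * φ x| ≤ c1M * M := by
      rw [abs_mul]
      exact mul_le_mul (abs_le.mpr h5) (by rwa [abs_of_nonneg h1]) (abs_nonneg _) hc1M0
    have e2 : |c₂ t * (φ x) ^ p| ≤ c2M * M ^ p := by
      rw [abs_mul]
      exact mul_le_mul (abs_le.mpr h6) (by rwa [abs_of_nonneg hxp0]) (abs_nonneg _) hc2M0
    have e1' := abs_le.mp e1
    have e2' := abs_le.mp e2
    simp only [hvdef]
    exact abs_le.mpr ⟨by linarith, by linarith⟩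
  -- Picard-Lindelof existence for the truncated field
  have hpl : IsPicardLindelof v (tmin := 0) (tmax := T) ⟨T, hTT⟩ qT (Cb * T).toNNReal 0
      Cb.toNNReal K₀.toNNReal :=
    { lipschitzOnWith := by
        intro t ht
        apply LipschitzWith.lipschitzOnWith
        rw [lipschitzWith_iff_dist_le_mul]
        intro x y
        rw [Real.dist_eq, Real.dist_eq, Real.coe_toNNReal _ hK₀0]
        have h1 : |v t x - v t y| ≤ K₀ * |φ x - φ y| := by
          simp only [hvdef]
          exact keylip t ht (φ x) (hφmem x) (φ y) (hφmem y)
        exact h1.trans (mul_le_mul_of_nonneg_left (hφlip x y) hK₀0)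
      continuousOn := by
        intro x _
        simp only [hvdef]
        exact ((hq.neg).sub (hc₁.mul continuousOn_const)).add (hc₂.mul continuousOn_const)
      norm_le := fun t ht x _ => by
        rw [Real.norm_eq_abs, Real.coe_toNNReal _ hCb0]; exact hnorm t ht x
      mul_max_le := by
        rw [Real.coe_toNNReal _ hCb0, NNReal.coe_zero, sub_zero,
          Real.coe_toNNReal _ (mul_nonneg hCb0 hT.le)]
        show Cb * max (T - T) T ≤ Cb * T - 0
        rw [sub_self, max_eq_right hT.le, sub_zero] }
  obtain ⟨f, hfT', hfd⟩ := hpl.exists_eq_forall_mem_Icc_hasDerivWithinAt₀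
  have hfT : f T = qT := hfT'
  -- extend the solution to a function with two-sided derivatives on [0, T]
  set ξ : ℝ → ℝ := fun t =>
    if t < 0 then f 0 + t * v 0 (f 0) else if t ≤ T then f t else f T + (t - T) * v T (f T)
    with hξdef
  have hξeq : ∀ t ∈ Icc 0 T, ξ t = f t := by
    intro t ht
    simp only [hξdef]
    rw [if_neg (not_lt.mpr ht.1), if_pos ht.2]
  have hξd : ∀ t ∈ Icc 0 T, HasDerivAt ξ (v t (ξ t)) t := by
    intro t ht
    rw [hξeq t ht]
    rcases eq_or_lt_of_le ht.1 with h0 | h0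
    · -- t = 0
      have h0' : t = 0 := h0.symm
      subst h0'
      have hdw : HasDerivWithinAt f (v 0 (f 0)) (Icc 0 T) 0 := hfd 0 h0T
      have h1 : HasDerivWithinAt ξ (v 0 (f 0)) (Ici 0) 0 := by
        refine (hdw.mono_of_mem_nhdsWithin (Icc_mem_nhdsGE hT)).congr_of_eventuallyEq
          ?_ (hξeq 0 h0T)
        filter_upwards [Icc_mem_nhdsGE hT] with s hs
        exact hξeq s hs
      have h2 : HasDerivWithinAt ξ (v 0 (f 0)) (Iic 0) 0 := by
        have hL : HasDerivAt (fun s : ℝ => f 0 + s * v 0 (f 0)) (v 0 (f 0)) 0 := by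
          simpa using ((hasDerivAt_id (0:ℝ)).mul_const (v 0 (f 0))).const_add (f 0)
        refine hL.hasDerivWithinAt.congr ?_ ?_
        · intro s hs
          rcases lt_or_eq_of_le (mem_Iic.mp hs) with h | h
          · simp only [hξdef]; rw [if_pos h]
          · subst h
            rw [hξeq 0 h0T]; simp
        · rw [hξeq 0 h0T]; simp
      have h3 := h2.union h1
      rw [Iic_union_Ici] at h3
      exact hasDerivWithinAt_univ.mp h3
    rcases eq_or_lt_of_le ht.2 with hT' | hT'
    · -- t = T
      subst hT'
      have hdw : HasDerivWithinAt f (v t (f t)) (Icc 0 t) t := hfd t ht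
      have h1 : HasDerivWithinAt ξ (v t (f t)) (Iic t) t := by
        refine (hdw.mono_of_mem_nhdsWithin (Icc_mem_nhdsLE h0)).congr_of_eventuallyEq
          ?_ (hξeq t ht)
        filter_upwards [Icc_mem_nhdsLE h0] with s hs
        exact hξeq s hs
      have h2 : HasDerivWithinAt ξ (v t (f t)) (Ici t) t := by
        have hL : HasDerivAt (fun s : ℝ => f t + (s - t) * v t (f t)) (v t (f t)) t := by
          simpa using (((hasDerivAt_id t).sub_const t).mul_const (v t (f t))).const_add (f t)
        refine hL.hasDerivWithinAt.congr ?_ ?_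
        · intro s hs
          rcases eq_or_lt_of_le (mem_Ici.mp hs) with h | h
          · rw [← h, hξeq t ht]; simp
          · simp only [hξdef]
            rw [if_neg (by push_neg; linarith), if_neg (by push_neg; exact h)]
        · rw [hξeq t ht]; simp
      have h3 := h1.union h2
      rw [Iic_union_Ici] at h3
      exact hasDerivWithinAt_univ.mp h3
    · -- interior
      have hmem : Icc 0 T ∈ 𝓝 t := Icc_mem_nhds h0 hT'
      have h1 : HasDerivAt f (v t (f t)) t := (hfd t ht).hasDerivAt hmem
      refine h1.congr_of_eventuallyEq ?_
      filter_upwards [hmem] with s hs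
      exact hξeq s hs
  have hξT : ξ T = qT := by rw [hξeq T hTT, hfT]
  have hφ0 : φ 0 = 0 := hφeq 0 le_rfl hM0.le
  have hφM : φ M = M := hφeq M hM0.le le_rfl
  have hv0 : ∀ t, v t 0 = -(q t) := by
    intro t
    simp only [hvdef, hφ0]
    rw [Real.zero_rpow (ne_of_gt hp0)]
    ring
  have hvM : ∀ t, v t M = -(q t) - c₁ t * M + c₂ t * M ^ p := by
    intro t
    simp only [hvdef, hφM]
  -- positivity
  have hξpos : ∀ t ∈ Ico 0 T, 0 < ξ t := by
    refine barrier hT ξ (fun t => v t (ξ t)) hξd (by rw [hξT]; exact hqT) ?_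
    intro t ht h0
    show v t (ξ t) < 0
    rw [h0, hv0 t]
    simpa using hqpos t ht
  -- upper bound
  have hξlt : ∀ t ∈ Ico 0 T, ξ t < M := by
    have hbar := barrier hT (fun t => M - ξ t) (fun t => -(v t (ξ t)))
      (fun t ht => (hξd t ht).const_sub M)
      (by show 0 ≤ M - ξ T; rw [hξT]; linarith) ?_
    · intro t ht
      have h := hbar t ht
      have h' : 0 < M - ξ t := h
      linarith
    · intro t ht h0
      have hξM : ξ t = M := by
        have h0' : M - ξ t = 0 := h0
        linarith
      show -(v t (ξ t)) < 0
      rw [hξM, hvM t]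
      have := hMfield t ht
      linarith
  have hξmem : ∀ t ∈ Icc 0 T, ξ t ∈ Icc 0 M := by
    intro t ht
    rcases eq_or_lt_of_le ht.2 with h | h
    · subst h
      rw [hξT]
      exact ⟨hqT, by linarith⟩
    · exact ⟨(hξpos t ⟨ht.1, h⟩).le, (hξlt t ⟨ht.1, h⟩).le⟩
  have hξode : ∀ t ∈ Icc 0 T, HasDerivAt ξ (-(q t) - c₁ t * ξ t + c₂ t * ξ t ^ p) t := by
    intro t ht
    have h := hξd t ht
    have hval : v t (ξ t) = -(q t) - c₁ t * ξ t + c₂ t * ξ t ^ p := by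
      simp only [hvdef]
      rw [hφeq _ (hξmem t ht).1 (hξmem t ht).2]
    rwa [hval] at h
  refine ⟨ξ, hξT, hξode, hξpos, ?_⟩
  -- uniqueness
  intro ζ hζT hζd
  have hζpos : ∀ t ∈ Ico 0 T, 0 < ζ t := by
    refine barrier hT ζ _ hζd (by rw [hζT]; exact hqT) ?_
    intro t ht h0
    show -(q t) - c₁ t * ζ t + c₂ t * ζ t ^ p < 0
    rw [h0, Real.zero_rpow (ne_of_gt hp0)]
    have := hqpos t ht
    simp only [mul_zero]
    linarith
  have hζlt : ∀ t ∈ Ico 0 T, ζ t < M := by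
    have hbar := barrier hT (fun t => M - ζ t)
      (fun t => -(-(q t) - c₁ t * ζ t + c₂ t * ζ t ^ p))
      (fun t ht => (hζd t ht).const_sub M)
      (by show 0 ≤ M - ζ T; rw [hζT]; linarith) ?_
    · intro t ht
      have h := hbar t ht
      have h' : 0 < M - ζ t := h
      linarith
    · intro t ht h0
      have hζM : ζ t = M := by
        have h0' : M - ζ t = 0 := h0
        linarith
      show -(-(q t) - c₁ t * ζ t + c₂ t * ζ t ^ p) < 0
      rw [hζM]
      have := hMfield t ht
      linarith
  have hζmem : ∀ t ∈ Icc 0 T, ζ t ∈ Icc 0 M := by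
    intro t ht
    rcases eq_or_lt_of_le ht.2 with h | h
    · subst h
      rw [hζT]
      exact ⟨hqT, by linarith⟩
    · exact ⟨(hζpos t ⟨ht.1, h⟩).le, (hζlt t ⟨ht.1, h⟩).le⟩
  have hw : ∀ t : ℝ, LipschitzOnWith K₀.toNNReal
      (fun x => -(q t) - c₁ t * x + c₂ t * x ^ p)
      (if t ∈ Icc (0:ℝ) T then Icc (0:ℝ) M else (∅ : Set ℝ)) := by
    intro t
    by_cases ht : t ∈ Icc (0:ℝ) T
    · rw [if_pos ht, lipschitzOnWith_iff_dist_le_mul]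
      intro x hx y hy
      rw [Real.dist_eq, Real.dist_eq, Real.coe_toNNReal _ hK₀0]
      exact keylip t ht x hx y hy
    · rw [if_neg ht]
      exact lipschitzOnWith_empty _ _
  refine ODE_solution_unique_of_mem_Icc_left (fun t _ => hw t)
    (fun t ht => (hζd t ht).continuousAt.continuousWithinAt)
    (fun t ht => (hζd t (Ioc_subset_Icc_self ht)).hasDerivWithinAt)
    (fun t ht => by
      rw [if_pos (Ioc_subset_Icc_self ht)]
      exact hζmem t (Ioc_subset_Icc_self ht))
    (fun t ht => (hξode t ht).continuousAt.continuousWithinAt)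
    (fun t ht => (hξode t (Ioc_subset_Icc_self ht)).hasDerivWithinAt)
    (fun t ht => by
      rw [if_pos (Ioc_subset_Icc_self ht)]
      exact hξmem t (Ioc_subset_Icc_self ht))
    (by rw [hζT, hξT])
end

section
/- Let Q be an S×S generator matrix (q_{ss'} ≥ 0 for s ≠ s', rows summing to 0), and suppose α : [0,T] → ℝ^S is a C¹ solution of the backward system α̇_s(t) + g_s(t) + c_s(t)·α_s(t) + ∑_{s'}(α_{s'}(t) − α_s(t))·q_{ss'} − d_s(t)·α_s(t)^p = 0 with α_s(T) = q_{T,s} ≥ 0, where g_s(t) > 0, c_s, d_s continuous, d_s ≥ 0, and p > 1. Then α_s(t) ≥ 0 for all s and all t ∈ [0,T] (where the solution is defined and, at points where α_s < 0, α_s^p is interpreted as 0). -/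
open Topology Filter


/-- Backward invariance of the nonnegative orthant for the coupled coefficient
system of the Gauss–Volterra MFTG: solutions with nonnegative terminal data stay
nonnegative on `[0,T]`. -/
theorem stmt_18 {S : Type*} [Fintype S] (T : ℝ) (hT : 0 < T)
    (Q : Matrix S S ℝ) (hQoff : ∀ s s', s ≠ s' → 0 ≤ Q s s')
    (hQrow : ∀ s, ∑ s', Q s s' = 0)
    (g c d : ℝ → S → ℝ) (p : ℝ) (hp : 1 < p)
    (hg : ∀ t ∈ Set.Icc 0 T, ∀ s, 0 < g t s)
    (hc : ∀ s, ContinuousOn (fun t => c t s) (Set.Icc 0 T))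
    (hd : ∀ s, ContinuousOn (fun t => d t s) (Set.Icc 0 T))
    (hdpos : ∀ t ∈ Set.Icc 0 T, ∀ s, 0 ≤ d t s)
    (α : ℝ → S → ℝ) (qT : S → ℝ) (hqT : ∀ s, 0 ≤ qT s)
    (hαT : ∀ s, α T s = qT s)
    (hODE : ∀ t ∈ Set.Icc 0 T, ∀ s, HasDerivAt (fun t => α t s)
      (-(g t s) - c t s * α t s - (∑ s', (α t s' - α t s) * Q s s') +
        d t s * (max (α t s) 0) ^ p) t) :
    ∀ t ∈ Set.Icc 0 T, ∀ s, 0 ≤ α t s := by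
  intro t0 ht0 s0
  by_contra hneg
  push_neg at hneg
  -- The set of "bad" times
  set B : Set ℝ := {u | u ∈ Set.Icc t0 T ∧ ∃ s, α u s < 0} with hBdef
  have hBne : B.Nonempty := ⟨t0, ⟨le_refl _, ht0.2⟩, s0, hneg⟩
  have hBbdd : BddAbove B := ⟨T, fun u hu => hu.1.2⟩
  set τ := sSup B with hτdef
  have hτT : τ ≤ T := csSup_le hBne fun u hu => hu.1.2
  have ht0τ : t0 ≤ τ := le_csSup hBbdd ⟨⟨le_refl _, ht0.2⟩, s0, hneg⟩
  have hτmem : τ ∈ Set.Icc (0:ℝ) T := ⟨ht0.1.trans ht0τ, hτT⟩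
  have hcont : ∀ s, ContinuousAt (fun u => α u s) τ := fun s =>
    (hODE τ hτmem s).continuousAt
  -- τ itself is not a bad time
  have hτnonneg : ∀ s, 0 ≤ α τ s := by
    intro s
    by_contra h
    push_neg at h
    have hτne : τ ≠ T := by
      intro heq
      rw [heq, hαT s] at h
      exact absurd (hqT s) (not_le.2 h)
    have hτltT : τ < T := lt_of_le_of_ne hτT hτne
    have hev : (fun u => α u s) ⁻¹' Set.Iio 0 ∈ 𝓝 τ := (hcont s) (Iio_mem_nhds h)
    have hev' : ((fun u => α u s) ⁻¹' Set.Iio 0) ∩ Set.Ioo τ T ∈ 𝓝[>] τ :=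
      Filter.inter_mem (nhdsWithin_le_nhds hev)
        (Ioo_mem_nhdsGT_of_mem ⟨le_refl τ, hτltT⟩)
    obtain ⟨u, hu1, hu2⟩ := Filter.nonempty_of_mem hev' 
    have huB : u ∈ B := ⟨⟨ht0τ.trans hu2.1.le, hu2.2.le⟩, s, hu1⟩
    exact absurd (le_csSup hBbdd huB) (not_le.2 hu2.1)
  have ht0lt : t0 < τ := lt_of_le_of_ne ht0τ (by
    intro heq
    rw [heq] at hneg
    exact absurd (hτnonneg s0) (not_le.2 hneg))
  -- bad times accumulate at τ from the left
  have hfreq : ∃ᶠ u in 𝓝[<] τ, ∃ s, α u s < 0 := by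
    rw [Filter.frequently_iff]
    intro U hU
    obtain ⟨l, hl, hsub⟩ := mem_nhdsLT_iff_exists_Ioo_subset.1 hU
    obtain ⟨v, hvB, hlv⟩ := exists_lt_of_lt_csSup hBne hl
    have hvτ : v ≤ τ := le_csSup hBbdd hvB
    have hvlt : v < τ := lt_of_le_of_ne hvτ (by
      intro heq
      obtain ⟨_, s, hs⟩ := hvB
      rw [heq] at hs
      exact absurd (hτnonneg s) (not_le.2 hs))
    exact ⟨v, hsub ⟨hlv, hvlt⟩, hvB.2⟩
  -- pigeonhole: one fixed component is frequently negative
  have hpig : ∃ s, ∃ᶠ u in 𝓝[<] τ, α u s < 0 := by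
    by_contra h
    push_neg at h
    have hev : ∀ᶠ u in 𝓝[<] τ, ∀ s, ¬ α u s < 0 :=
      Filter.eventually_all.2 fun s => (h s).mono fun u hu => not_lt.2 hu
    obtain ⟨u, ⟨s, hs⟩, hall⟩ := (hfreq.and_eventually hev).exists
    exact hall s hs
  obtain ⟨s₁, hfs⟩ := hpig
  set l' : Filter ℝ := 𝓝[<] τ ⊓ Filter.principal {u | α u s₁ < 0} with hl'def
  have hl'ne : l'.NeBot := Filter.frequently_iff_neBot.1 hfs
  have hl'lt : ∀ᶠ u in l', u < τ :=
    Filter.eventually_inf_principal.2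
      (Filter.eventually_of_mem self_mem_nhdsWithin fun u hu _ => hu)
  have hl'neg : ∀ᶠ u in l', α u s₁ < 0 :=
    Filter.eventually_inf_principal.2 (Filter.Eventually.of_forall fun u hu => hu)
  -- α τ s₁ = 0
  have hle : α τ s₁ ≤ 0 := by
    have htd : Filter.Tendsto (fun u => α u s₁) l' (𝓝 (α τ s₁)) :=
      (hcont s₁).mono_left (le_trans inf_le_left nhdsWithin_le_nhds)
    exact le_of_tendsto htd (hl'neg.mono fun u hu => hu.le)
  have hzero : α τ s₁ = 0 := le_antisymm hle (hτnonneg s₁)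
  -- the derivative at τ
  have hD := hODE τ hτmem s₁
  set D := -(g τ s₁) - c τ s₁ * α τ s₁ - (∑ s', (α τ s' - α τ s₁) * Q s₁ s') +
      d τ s₁ * (max (α τ s₁) 0) ^ p with hDdef
  -- D ≥ 0 from left slopes
  have hslope : Filter.Tendsto (slope (fun u => α u s₁) τ) (𝓝[≠] τ) (𝓝 D) :=
    hasDerivAt_iff_tendsto_slope.1 hD
  have hl'le : l' ≤ 𝓝[≠] τ :=
    le_trans inf_le_left (nhdsWithin_mono _ fun u hu => ne_of_lt hu)
  have hDnonneg : 0 ≤ D := by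
    refine ge_of_tendsto (hslope.mono_left hl'le) ?_
    refine (hl'lt.and hl'neg).mono fun u hu => ?_
    have h1 : α u s₁ - α τ s₁ ≤ 0 := by rw [hzero]; linarith [hu.2]
    have h2 : u - τ ≤ 0 := by linarith [hu.1]
    rw [slope_def_field, div_nonneg_iff]
    exact Or.inr ⟨h1, h2⟩
  -- D < 0 from the structure of the equation
  have hsum : 0 ≤ ∑ s', (α τ s' - α τ s₁) * Q s₁ s' := by
    apply Finset.sum_nonneg
    intro s' _
    rcases eq_or_ne s' s₁ with rfl | hne
    · simp
    · exact mul_nonneg (by rw [hzero]; simpa using hτnonneg s') (hQoff s₁ s' (Ne.symm hne))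
  have hmax : (max (α τ s₁) 0 : ℝ) ^ p = 0 := by
    rw [hzero, max_self, Real.zero_rpow (by linarith)]
  have hDneg : D < 0 := by
    rw [hDdef, hmax]
    rw [hzero] at hsum ⊢
    have := hg τ hτmem s₁
    nlinarith
  linarith
end
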